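/- In the Zorn vector matrix algebra over a field k, an element x = [[a, α],[β, b]] of norm 1 satisfies x² = −1 if and only if either (α = β = 0, b = a⁻¹, and a² = −1) or ((α, β) ≠ (0,0) and b = −a). -/
import Mathlib


/-- Zorn vector matrices `[[a, α], [β, b]]` over a field `k`. -/
@[ext]
structure Zorn (k : Type*) where
  a : k
  α : Fin 3 → k
  β : Fin 3 → k
  b : k

namespace Zorn

variable {k : Type*} [Field k]

/-- Dot product on `k³`. -/
def dot (u v : Fin 3 → k) : k := u 0 * v 0 + u 1 * v 1 + u 2 * v 2

/-- Cross product on `k³`. -/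
def cross (u v : Fin 3 → k) : Fin 3 → k :=
  ![u 1 * v 2 - u 2 * v 1, u 2 * v 0 - u 0 * v 2, u 0 * v 1 - u 1 * v 0]

/-- Zorn vector matrix multiplication. -/
instance : Mul (Zorn k) :=
  ⟨fun x y =>
    ⟨x.a * y.a + dot x.α y.β,
     fun i => x.a * y.α i + y.b * x.α i - cross x.β y.β i,
     fun i => y.a * x.β i + x.b * y.β i + cross x.α y.α i,
     dot x.β y.α + x.b * y.b⟩⟩

instance : One (Zorn k) := ⟨⟨1, 0, 0, 1⟩⟩
instance : Zero (Zorn k) := ⟨⟨0, 0, 0, 0⟩⟩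
instance : Add (Zorn k) := ⟨fun x y => ⟨x.a + y.a, x.α + y.α, x.β + y.β, x.b + y.b⟩⟩
instance : Neg (Zorn k) := ⟨fun x => ⟨-x.a, -x.α, -x.β, -x.b⟩⟩
instance : SMul k (Zorn k) := ⟨fun c x => ⟨c * x.a, c • x.α, c • x.β, c * x.b⟩⟩

/-- The norm (determinant) of a Zorn vector matrix. -/
def N (x : Zorn k) : k := x.a * x.b - dot x.α x.β

/-- The bilinear form associated with the norm. -/
def polarN (x y : Zorn k) : k := N (x + y) - N x - N y


/-- A norm-one Zorn vector matrix `x` satisfies `x² = −1` iff either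
(`α = β = 0`, `b = a⁻¹` and `a² = −1`) or (`(α, β) ≠ (0,0)` and `b = −a`). -/
lemma mul_a' (x y : Zorn k) : (x*y).a = x.a*y.a + dot x.α y.β := rfl
lemma mul_b' (x y : Zorn k) : (x*y).b = dot x.β y.α + x.b*y.b := rfl
lemma mul_α' (x y : Zorn k) (i : Fin 3) :
    (x*y).α i = x.a * y.α i + y.b * x.α i - cross x.β y.β i := rfl
lemma mul_β' (x y : Zorn k) (i : Fin 3) :
    (x*y).β i = y.a * x.β i + x.b * y.β i + cross x.α y.α i := rfl
lemma neg_one_a : ((-1 : Zorn k)).a = -1 := rfl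
lemma neg_one_b : ((-1 : Zorn k)).b = -1 := rfl
lemma neg_one_α (i : Fin 3) : ((-1 : Zorn k)).α i = 0 := by
  show -((0 : Fin 3 → k) i) = 0; simp
lemma neg_one_β (i : Fin 3) : ((-1 : Zorn k)).β i = 0 := by
  show -((0 : Fin 3 → k) i) = 0; simp

lemma cross_self (u : Fin 3 → k) (i : Fin 3) : cross u u i = 0 := by
  fin_cases i <;> simp [cross] <;> ring

theorem sq_eq_neg_one_iff (x : Zorn k) (hx : N x = 1) :
    x * x = -1 ↔
      (x.α = 0 ∧ x.β = 0 ∧ x.b = x.a⁻¹ ∧ x.a ^ 2 = -1) ∨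
      (¬(x.α = 0 ∧ x.β = 0) ∧ x.b = -x.a) := by
  have hd : dot x.α x.β = x.a * x.b - 1 := by
    have h' : x.a * x.b - dot x.α x.β = 1 := hx
    linear_combination -h'
  have hdsym : dot x.β x.α = dot x.α x.β := by simp [dot]; ring
  constructor
  · intro h
    have h1 : (x*x).a = (-1 : Zorn k).a := by rw [h]
    have h2 : (x*x).b = (-1 : Zorn k).b := by rw [h]
    rw [mul_a', neg_one_a, hd] at h1
    rw [mul_b', neg_one_b, hdsym, hd] at h2
    have hb : x.b = -x.a := by
      have hsq : (x.a + x.b)^2 = 0 := by linear_combination h1 + h2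
      have h3 := pow_eq_zero_iff (n := 2) (two_ne_zero) |>.mp hsq
      linear_combination h3
    by_cases h0 : x.α = 0 ∧ x.β = 0
    · left
      have hd0 : dot x.α x.β = 0 := by simp [h0.1, dot]
      have hab1 : x.a * x.b = 1 := by linear_combination hd0 - hd
      have ha0 : x.a ≠ 0 := by rintro h'; rw [h'] at hab1; simp at hab1
      refine ⟨h0.1, h0.2, ?_, ?_⟩
      · field_simp
        linear_combination hab1
      · rw [hb] at hab1
        linear_combination -hab1
    · exact Or.inr ⟨h0, hb⟩
  · rintro (⟨hα, hβ, hbval, ha2⟩ | ⟨h0, hb⟩)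
    · have ha0 : x.a ≠ 0 := by
        intro h'; rw [h'] at ha2
        exact absurd ha2 (by norm_num)
      have hb2 : x.b ^ 2 = -1 := by
        rw [hbval, inv_pow, ha2, inv_neg, inv_one]
      refine Zorn.ext ?_ (funext fun i => ?_) (funext fun i => ?_) ?_
      · rw [mul_a', neg_one_a]
        simp [hα, dot]
        linear_combination ha2
      · rw [mul_α', neg_one_α, hα, hβ, cross_self]; simp
      · rw [mul_β', neg_one_β, hα, hβ, cross_self]; simp
      · rw [mul_b', neg_one_b]
        simp [hβ, dot]
        linear_combination hb2
    · refine Zorn.ext ?_ (funext fun i => ?_) (funext fun i => ?_) ?_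
      · rw [mul_a', neg_one_a, hd, hb]; ring
      · rw [mul_α', neg_one_α, hb, cross_self]; ring
      · rw [mul_β', neg_one_β, hb, cross_self]; ring
      · rw [mul_b', neg_one_b, hdsym, hd, hb]; ring

end Zorn
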